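/- arXiv:2301.12195 — 3 statements merged into one kernel-verified Lean document; each statement's English description precedes it below -/
import Mathlib

section
/- Multivariate Stein's identity: let n ∈ ℕ, σ > 0, and let μ_σ be the product measure on EuclideanSpace ℝ (Fin n) each of whose n coordinates is independently distributed as the Gaussian measure N(0, σ²). If g : EuclideanSpace ℝ (Fin n) → ℝ is continuously differentiable, the maps δ ↦ δ·g(δ) (vector-valued) and δ ↦ ∇g(δ) are integrable against μ_σ, and g has at most polynomial growth, then ∫ δ·g(δ) dμ_σ(δ) = σ² · ∫ ∇g(δ) dμ_σ(δ), where both sides are vectors in EuclideanSpace ℝ (Fin n) and ∇g denotes the gradient of g. -/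
open MeasureTheory ProbabilityTheory Real Filter
open scoped NNReal ENNReal


-- transfer lemmas
lemma gauss_integral_eq (v : ℝ≥0) (hv : v ≠ 0) (h : ℝ → ℝ) :
    ∫ x, h x ∂(gaussianReal 0 v) = ∫ x, gaussianPDFReal 0 v x * h x := by
  rw [gaussianReal_of_var_ne_zero _ hv]
  have hm : Measurable (fun x => (gaussianPDFReal 0 v x).toNNReal) :=
    (measurable_gaussianPDFReal 0 v).real_toNNReal
  have : gaussianPDF 0 v = fun x => ((gaussianPDFReal 0 v x).toNNReal : ℝ≥0∞) := rfl
  rw [this, integral_withDensity_eq_integral_smul hm]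
  congr 1; ext x
  simp [NNReal.smul_def, Real.coe_toNNReal _ (gaussianPDFReal_nonneg 0 v x)]

lemma gauss_integrable_iff (v : ℝ≥0) (hv : v ≠ 0) (h : ℝ → ℝ) :
    Integrable h (gaussianReal 0 v) ↔ Integrable (fun x => gaussianPDFReal 0 v x * h x) := by
  rw [gaussianReal_of_var_ne_zero _ hv]
  have hm : Measurable (fun x => (gaussianPDFReal 0 v x).toNNReal) :=
    (measurable_gaussianPDFReal 0 v).real_toNNReal
  have : gaussianPDF 0 v = fun x => ((gaussianPDFReal 0 v x).toNNReal : ℝ≥0∞) := rfl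
  rw [this, integrable_withDensity_iff_integrable_smul hm]
  apply integrable_congr; filter_upwards with x
  simp [NNReal.smul_def, Real.coe_toNNReal _ (gaussianPDFReal_nonneg 0 v x)]

-- derivative of the pdf
lemma hasDerivAt_gaussianPDFReal (v : ℝ≥0) (hv : v ≠ 0) (x : ℝ) :
    HasDerivAt (gaussianPDFReal 0 v) (-(x / v) * gaussianPDFReal 0 v x) x := by
  have hv' : (v : ℝ) ≠ 0 := by exact_mod_cast hv
  have h1 : HasDerivAt (fun x : ℝ => -(x - 0)^2 / (2 * v)) (-(x / v)) x := by
    have h0 : HasDerivAt (fun x : ℝ => -(x - 0)^2 / (2 * (v:ℝ))) ((-((2:ℕ) * (x - 0) ^ (2-1) * 1)) / (2 * (v:ℝ))) x :=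
      (((hasDerivAt_id x).sub_const 0).pow 2).neg.div_const _
    convert h0 using 1
    field_simp
    ring
  have h2 := (h1.exp).const_mul (√(2 * π * v))⁻¹
  refine h2.congr_deriv ?_
  simp only [gaussianPDFReal]
  ring

lemma tendsto_poly_gauss (b : ℝ) (hb : 0 < b) (k : ℕ) :
    Tendsto (fun r : ℝ => (1 + r) ^ k * Real.exp (-b * r ^ 2)) atTop (nhds 0) := by
  have hexp : Tendsto (fun r : ℝ => Real.exp (-(1/2) * r)) atTop (nhds 0) := by
    apply Real.tendsto_exp_atBot.comp
    exact Tendsto.const_mul_atTop_of_neg (by norm_num : (-(1/2) : ℝ) < 0) tendsto_id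
  have h1 : Tendsto (fun r : ℝ => (r : ℝ) ^ (k : ℝ) * Real.exp (-b * r ^ 2)) atTop (nhds 0) :=
    (rpow_mul_exp_neg_mul_sq_isLittleO_exp_neg hb (k : ℝ)).trans_tendsto hexp
  have h2 : Tendsto (fun r : ℝ => (2:ℝ) ^ k * (r ^ (k : ℝ) * Real.exp (-b * r ^ 2))) atTop (nhds 0) := by
    simpa using h1.const_mul ((2:ℝ) ^ k)
  refine squeeze_zero' ?_ ?_ h2
  · filter_upwards [eventually_ge_atTop (0:ℝ)] with r hr
    positivity
  · filter_upwards [eventually_ge_atTop (1:ℝ)] with r hr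
    rw [Real.rpow_natCast, ← mul_assoc, ← mul_pow]
    have : (1 + r) ^ k ≤ (2 * r) ^ k := pow_le_pow_left₀ (by linarith) (by linarith) k
    exact mul_le_mul_of_nonneg_right this (Real.exp_nonneg _)

lemma stein1 (σ : ℝ) (hσ : 0 < σ) (f f' : ℝ → ℝ) (hd : ∀ x, HasDerivAt f (f' x) x)
    (hint : Integrable (fun x => x * f x) (gaussianReal 0 ⟨σ^2, sq_nonneg σ⟩))
    (hint' : Integrable f' (gaussianReal 0 ⟨σ^2, sq_nonneg σ⟩))
    (C : ℝ) (k : ℕ) (hgrowth : ∀ x, |f x| ≤ C * (1 + |x|) ^ k) :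
    ∫ x, x * f x ∂(gaussianReal 0 ⟨σ^2, sq_nonneg σ⟩)
      = σ^2 * ∫ x, f' x ∂(gaussianReal 0 ⟨σ^2, sq_nonneg σ⟩) := by
  set v : ℝ≥0 := ⟨σ^2, sq_nonneg σ⟩ with hv_def
  have hσ2 : (σ:ℝ)^2 ≠ 0 := by positivity
  have hv : v ≠ 0 := by
    intro h
    apply hσ2
    have := congrArg (fun x : ℝ≥0 => (x:ℝ)) h
    exact this
  have hvr : (v : ℝ) = σ^2 := rfl
  set φ : ℝ → ℝ := gaussianPDFReal 0 v with hφ_def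
  have hφ_nonneg : ∀ x, 0 ≤ φ x := gaussianPDFReal_nonneg 0 v
  have hC : 0 ≤ C := by
    have := hgrowth 0
    have h0 : (0:ℝ) ≤ |f 0| := abs_nonneg _
    simpa using le_trans h0 this
  -- the function whose derivative we integrate
  set F : ℝ → ℝ := fun x => -σ^2 * (φ x * f x) with hF_def
  have hF' : ∀ x, HasDerivAt F (x * (φ x * f x) - σ^2 * (φ x * f' x)) x := by
    intro x
    have h1 := ((hasDerivAt_gaussianPDFReal v hv x).mul (hd x)).const_mul (-σ^2)
    refine h1.congr_deriv ?_
    rw [hvr]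
    field_simp
    ring
  -- integrability on volume
  have I1 : Integrable (fun x => x * (φ x * f x)) := by
    have := (gauss_integrable_iff v hv (fun x => x * f x)).mp hint
    apply this.congr
    filter_upwards with x; ring
  have I2 : Integrable (fun x => σ^2 * (φ x * f' x)) := by
    have := (gauss_integrable_iff v hv f').mp hint'
    exact (this.const_mul _)
  -- boundary limits
  have hb : (0:ℝ) < 1/(2*σ^2) := by positivity
  have hbound : ∀ x : ℝ, |F x| ≤ (σ^2 * (√(2 * π * v))⁻¹ * C) * ((1 + |x|)^k * Real.exp (-(1/(2*σ^2)) * |x|^2)) := by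
    intro x
    have hφx : φ x = (√(2 * π * v))⁻¹ * Real.exp (-(1/(2*σ^2)) * |x|^2) := by
      rw [hφ_def, gaussianPDFReal, hvr, sq_abs]
      ring_nf
    rw [hF_def]
    simp only [abs_mul, abs_neg]
    rw [abs_of_nonneg (sq_nonneg σ), abs_of_nonneg (hφ_nonneg x), hφx]
    have h1 : |f x| ≤ C * (1 + |x|)^k := hgrowth x
    have hsqrt : (0:ℝ) ≤ (√(2 * π * v))⁻¹ := by positivity
    calc σ^2 * ((√(2 * π * v))⁻¹ * Real.exp (-(1/(2*σ^2)) * |x|^2) * |f x|)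
        ≤ σ^2 * ((√(2 * π * v))⁻¹ * Real.exp (-(1/(2*σ^2)) * |x|^2) * (C * (1 + |x|)^k)) := by
          apply mul_le_mul_of_nonneg_left _ (sq_nonneg σ)
          apply mul_le_mul_of_nonneg_left h1
          positivity
      _ = (σ^2 * (√(2 * π * v))⁻¹ * C) * ((1 + |x|)^k * Real.exp (-(1/(2*σ^2)) * |x|^2)) := by ring
  have hMtendsto : Tendsto (fun r : ℝ => (σ^2 * (√(2 * π * v))⁻¹ * C) * ((1 + r)^k * Real.exp (-(1/(2*σ^2)) * r^2))) atTop (nhds 0) := by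
    simpa using (tendsto_poly_gauss _ hb k).const_mul (σ^2 * (√(2 * π * v))⁻¹ * C)
  have htop : Tendsto F atTop (nhds 0) := by
    apply squeeze_zero_norm' _ (hMtendsto.comp tendsto_abs_atTop_atTop)
    filter_upwards with x
    simpa using hbound x
  have hbot : Tendsto F atBot (nhds 0) := by
    apply squeeze_zero_norm' _ (hMtendsto.comp tendsto_abs_atBot_atTop)
    filter_upwards with x
    simpa using hbound x
  have key : ∫ x, (x * (φ x * f x) - σ^2 * (φ x * f' x)) = 0 := by
    rw [integral_of_hasDerivAt_of_tendsto hF' (I1.sub I2) hbot htop]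
    simp
  rw [integral_sub I1 I2] at key
  have h1 : ∫ x, x * f x ∂(gaussianReal 0 v) = ∫ x, x * (φ x * f x) := by
    rw [gauss_integral_eq v hv]
    congr 1; ext x; ring
  have h2 : σ^2 * ∫ x, f' x ∂(gaussianReal 0 v) = ∫ x, σ^2 * (φ x * f' x) := by
    rw [gauss_integral_eq v hv, ← integral_const_mul]
  rw [h1, h2]
  linarith [key]

/-- The law of an `n`-dimensional Gaussian vector with mean `0` and covariance `σ² I`,
realized as the product over `Fin n` of `gaussianReal 0 σ²`, viewed as a measure on
`EuclideanSpace ℝ (Fin n)`. -/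
noncomputable def gaussPi (n : ℕ) (σ : ℝ) : Measure (EuclideanSpace ℝ (Fin n)) :=
  (Measure.pi fun _ : Fin n => gaussianReal 0 ⟨σ ^ 2, sq_nonneg σ⟩).map
    (MeasurableEquiv.toLp 2 (Fin n → ℝ))



theorem stein_main (m : ℕ) (σ : ℝ) (hσ : 0 < σ)
    (g : EuclideanSpace ℝ (Fin (m+1)) → ℝ) (hg : ContDiff ℝ 1 g)
    (hint₁ : Integrable (fun δ => g δ • δ) (gaussPi (m+1) σ))
    (hint₂ : Integrable (fun δ => gradient g δ) (gaussPi (m+1) σ))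
    (hgrowth : ∃ (C : ℝ) (k : ℕ), ∀ δ : EuclideanSpace ℝ (Fin (m+1)),
      |g δ| ≤ C * (1 + ‖δ‖) ^ k) :
    ∫ δ, g δ • δ ∂(gaussPi (m+1) σ) = σ ^ 2 • ∫ δ, gradient g δ ∂(gaussPi (m+1) σ) := by
  obtain ⟨C, k, hgro⟩ := hgrowth
  set v : ℝ≥0 := ⟨σ^2, sq_nonneg σ⟩ with hv_def
  set γ := gaussianReal 0 v with hγ_def
  set Pn := Measure.pi (fun _ : Fin (m+1) => γ) with hPn_def
  set Pm := Measure.pi (fun _ : Fin m => γ) with hPm_def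
  set e := (MeasurableEquiv.toLp 2 (Fin (m+1) → ℝ)).symm with he_def
  set μ := gaussPi (m+1) σ with hμ_def
  have hμ : μ = Pn.map e.symm := rfl
  -- gradient coordinate formula
  have hgrad : ∀ (δ : EuclideanSpace ℝ (Fin (m+1))) (i : Fin (m+1)),
      gradient g δ i = fderiv ℝ g δ (EuclideanSpace.single i 1) := by
    intro δ i
    have h1 : (gradient g δ) i = (inner ℝ (EuclideanSpace.single i (1:ℝ)) (gradient g δ) : ℝ) := by
      rw [EuclideanSpace.inner_single_left]; simp
    rw [h1, real_inner_comm, gradient, InnerProductSpace.toDual_symm_apply]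
  refine PiLp.ext fun i => ?_
  -- coordinate projections of both sides
  have hL : (∫ δ, g δ • δ ∂μ) i = ∫ δ, g δ * δ i ∂μ :=
    (ContinuousLinearMap.integral_comp_comm (EuclideanSpace.proj i) hint₁).symm
  have hR : (∫ δ, gradient g δ ∂μ) i = ∫ δ, fderiv ℝ g δ (EuclideanSpace.single i 1) ∂μ := by
    refine ((ContinuousLinearMap.integral_comp_comm (EuclideanSpace.proj i) hint₂).symm).trans ?_
    exact integral_congr_ae (Filter.Eventually.of_forall fun δ => hgrad δ i)
  have hRs : (σ ^ 2 • ∫ δ, gradient g δ ∂μ) i = σ^2 * ∫ δ, fderiv ℝ g δ (EuclideanSpace.single i 1) ∂μ := by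
    rw [← hR]; rfl
  rw [hL, hRs]
  -- transfer to pi measure
  set equiv := MeasurableEquiv.piFinSuccAbove (fun _ : Fin (m+1) => ℝ) i with hequiv_def
  have mp := measurePreserving_piFinSuccAbove (fun _ : Fin (m+1) => γ) i
  set H₁ : (Fin (m+1) → ℝ) → ℝ := fun y => g (e.symm y) * y i with hH₁_def
  set H₂ : (Fin (m+1) → ℝ) → ℝ := fun y => fderiv ℝ g (e.symm y) (EuclideanSpace.single i 1) with hH₂_def
  have hint₁' : Integrable (fun δ => g δ * δ i) μ := by
    have := (EuclideanSpace.proj i : EuclideanSpace ℝ (Fin (m+1)) →L[ℝ] ℝ).integrable_comp hint₁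
    exact this
  have hint₂' : Integrable (fun δ => fderiv ℝ g δ (EuclideanSpace.single i 1)) μ := by
    have := (EuclideanSpace.proj i : EuclideanSpace ℝ (Fin (m+1)) →L[ℝ] ℝ).integrable_comp hint₂
    apply this.congr
    filter_upwards with δ
    exact hgrad δ i
  have hH₁int : Integrable H₁ Pn := by
    have := (integrable_map_equiv e.symm (fun δ => g δ * δ i)).mp hint₁'
    exact this
  have hH₂int : Integrable H₂ Pn := by
    have := (integrable_map_equiv e.symm (fun δ => fderiv ℝ g δ (EuclideanSpace.single i 1))).mp hint₂'
    exact this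
  set K₁ : ℝ × (Fin m → ℝ) → ℝ := fun p => H₁ (equiv.symm p) with hK₁_def
  set K₂ : ℝ × (Fin m → ℝ) → ℝ := fun p => H₂ (equiv.symm p) with hK₂_def
  have hK₁int : Integrable K₁ (γ.prod Pm) := by
    rw [← mp.map_eq]
    refine (integrable_map_equiv equiv K₁).mpr ?_
    apply hH₁int.congr
    filter_upwards with y
    exact congrArg H₁ (equiv.symm_apply_apply y).symm
  have hK₂int : Integrable K₂ (γ.prod Pm) := by
    rw [← mp.map_eq]
    refine (integrable_map_equiv equiv K₂).mpr ?_
    apply hH₂int.congr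
    filter_upwards with y
    exact congrArg H₂ (equiv.symm_apply_apply y).symm
  have hstep1 : ∫ δ, g δ * δ i ∂μ = ∫ z, ∫ x, K₁ (x, z) ∂γ ∂Pm := by
    rw [hμ, integral_map_equiv]
    have : ∫ y, g (e.symm y) * (e.symm y) i ∂Pn = ∫ p, K₁ p ∂(γ.prod Pm) := by
      rw [← mp.map_eq, integral_map_equiv]
      apply integral_congr_ae
      filter_upwards with y
      exact congrArg H₁ (equiv.symm_apply_apply y).symm
    rw [this, integral_prod_symm _ hK₁int]
  have hstep2 : ∫ δ, fderiv ℝ g δ (EuclideanSpace.single i 1) ∂μ = ∫ z, ∫ x, K₂ (x, z) ∂γ ∂Pm := by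
    rw [hμ, integral_map_equiv]
    have : ∫ y, fderiv ℝ g (e.symm y) (EuclideanSpace.single i 1) ∂Pn = ∫ p, K₂ p ∂(γ.prod Pm) := by
      rw [← mp.map_eq, integral_map_equiv]
      apply integral_congr_ae
      filter_upwards with y
      exact congrArg H₂ (equiv.symm_apply_apply y).symm
    rw [this, integral_prod_symm _ hK₂int]
  rw [hstep1, hstep2, ← integral_const_mul]
  -- now the inner a.e. equality via stein1
  apply integral_congr_ae
  filter_upwards [hK₁int.prod_left_ae, hK₂int.prod_left_ae] with z hz₁ hz₂
  -- the sliced function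
  set A : ℝ → EuclideanSpace ℝ (Fin (m+1)) :=
    fun x => e.symm (i.insertNth 0 z) + x • EuclideanSpace.single i 1 with hA_def
  have hA : ∀ x : ℝ, e.symm (i.insertNth x z) = A x := by
    intro x
    refine PiLp.ext fun j => ?_
    have hAj : (A x) j = i.insertNth (α := fun _ => ℝ) 0 z j + x * (if j = i then (1:ℝ) else 0) := by
      simp only [hA_def, PiLp.add_apply, PiLp.smul_apply, EuclideanSpace.single_apply, smul_eq_mul]
      rfl
    have hLj : (e.symm (i.insertNth x z)) j = i.insertNth (α := fun _ => ℝ) x z j := rfl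
    rw [hAj, hLj]
    refine Fin.succAboveCases i ?_ ?_ j
    · simp
    · intro j'
      simp [Fin.insertNth_apply_succAbove, (Fin.succAbove_ne i j')]
  have hAd : ∀ x : ℝ, HasDerivAt A (EuclideanSpace.single i 1) x := by
    intro x
    have h1 : HasDerivAt (fun x : ℝ => x • EuclideanSpace.single i (1:ℝ)) (EuclideanSpace.single i 1) x := by
      simpa using (hasDerivAt_id x).smul_const (EuclideanSpace.single i (1:ℝ))
    exact h1.const_add _
  have hderiv : ∀ x : ℝ, HasDerivAt (fun x => g (A x)) (fderiv ℝ g (A x) (EuclideanSpace.single i 1)) x := by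
    intro x
    exact ((hg.differentiable one_ne_zero) (A x)).hasFDerivAt.comp_hasDerivAt x (hAd x)
  have hK₁z : ∀ x : ℝ, K₁ (x, z) = x * g (A x) := by
    intro x
    have h0 : K₁ (x, z) = H₁ (i.insertNth x z) := rfl
    rw [h0, hH₁_def]
    simp only [hA x, Fin.insertNth_apply_same]
    ring
  have hK₂z : ∀ x : ℝ, K₂ (x, z) = fderiv ℝ g (A x) (EuclideanSpace.single i 1) := by
    intro x
    have h0 : K₂ (x, z) = H₂ (i.insertNth x z) := rfl
    rw [h0, hH₂_def]
    simp only [hA x]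
  -- growth bound
  have hC : 0 ≤ C := by
    have h := hgro 0
    have h0 : (0:ℝ) ≤ |g 0| := abs_nonneg _
    simpa using le_trans h0 h
  set B := ‖e.symm (i.insertNth 0 z)‖ with hB_def
  have hB : 0 ≤ B := norm_nonneg _
  have hgro' : ∀ x : ℝ, |g (A x)| ≤ (C * (1 + B)^k) * (1 + |x|)^k := by
    intro x
    refine le_trans (hgro (A x)) ?_
    rw [mul_assoc, ← mul_pow]
    apply mul_le_mul_of_nonneg_left _ hC
    apply pow_le_pow_left₀ (by positivity)
    have hnorm : ‖A x‖ ≤ B + |x| := by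
      refine le_trans (norm_add_le _ _) ?_
      rw [norm_smul, EuclideanSpace.norm_single]
      simp [hB_def]
    calc 1 + ‖A x‖ ≤ 1 + (B + |x|) := by linarith
      _ ≤ (1 + B) * (1 + |x|) := by nlinarith [abs_nonneg x]
  have h1 := stein1 σ hσ (fun x => g (A x)) (fun x => fderiv ℝ g (A x) (EuclideanSpace.single i 1))
    hderiv ?_ ?_ (C * (1 + B)^k) k hgro'
  · calc ∫ x, K₁ (x, z) ∂γ = ∫ x, x * g (A x) ∂γ := by
          apply integral_congr_ae; filter_upwards with x; exact hK₁z x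
      _ = σ^2 * ∫ x, fderiv ℝ g (A x) (EuclideanSpace.single i 1) ∂γ := h1
      _ = σ^2 * ∫ x, K₂ (x, z) ∂γ := by
          congr 1
          apply integral_congr_ae; filter_upwards with x; exact (hK₂z x).symm
  · apply hz₁.congr
    filter_upwards with x
    exact hK₁z x
  · apply hz₂.congr
    filter_upwards with x
    exact hK₂z x


/-- **Multivariate Stein's identity.** For `g` continuously differentiable with
polynomial growth, `∫ δ g(δ) dμ_σ = σ² ∫ ∇g(δ) dμ_σ` where `μ_σ = N(0, σ² I)`. -/
theorem stein_identity_multivariate (n : ℕ) (σ : ℝ) (hσ : 0 < σ)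
    (g : EuclideanSpace ℝ (Fin n) → ℝ) (hg : ContDiff ℝ 1 g)
    (hint₁ : Integrable (fun δ => g δ • δ) (gaussPi n σ))
    (hint₂ : Integrable (fun δ => gradient g δ) (gaussPi n σ))
    (hgrowth : ∃ (C : ℝ) (k : ℕ), ∀ δ : EuclideanSpace ℝ (Fin n),
      |g δ| ≤ C * (1 + ‖δ‖) ^ k) :
    ∫ δ, g δ • δ ∂(gaussPi n σ) = σ ^ 2 • ∫ δ, gradient g δ ∂(gaussPi n σ) := by
  rcases n with _ | m
  · exact Subsingleton.elim _ _
  · exact stein_main m σ hσ g hg hint₁ hint₂ hgrowth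
end

section
/- Quantitative convergence of the smoothed gradient: let n ∈ ℕ, σ > 0, and let μ_σ be the product measure on EuclideanSpace ℝ (Fin n) each of whose coordinates is distributed as N(0, σ²). If L : EuclideanSpace ℝ (Fin n) → ℝ is continuously differentiable and its gradient ∇L is Lipschitz with constant M ≥ 0 (and bounded), then for every W, ‖∇L_σ(W) − ∇L(W)‖ ≤ M · σ · √n, where L_σ(W) := ∫ L(W + δ) dμ_σ(δ). In particular ∇L_σ(W) → ∇L(W) as σ → 0⁺. -/
open MeasureTheory ProbabilityTheory

open Real Set
open scoped NNReal ENNReal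

lemma integral_sq_exp_neg_mul_sq {b : ℝ} (hb : 0 < b) :
    ∫ x : ℝ, x ^ 2 * Real.exp (-b * x ^ 2)
      = b ^ (-(3:ℝ)/2) * Real.sqrt π / 2 := by
  have hint : Integrable (fun x : ℝ => x ^ 2 * Real.exp (-b * x ^ 2)) := by
    have := integrable_rpow_mul_exp_neg_mul_sq hb (s := 2) (by norm_num)
    simpa [Real.rpow_natCast] using this
  have heven : ∀ x : ℝ, (-x) ^ 2 * Real.exp (-b * (-x) ^ 2)
      = x ^ 2 * Real.exp (-b * x ^ 2) := by intro x; ring_nf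
  have hIoi : ∫ x in Ioi (0:ℝ), x ^ 2 * Real.exp (-b * x ^ 2)
      = b ^ (-(3:ℝ)/2) * (1/2) * Real.Gamma ((3:ℝ)/2) := by
    have h := integral_rpow_mul_exp_neg_mul_rpow (p := 2) (q := 2) (by norm_num) (by norm_num) hb
    norm_num at h
    simpa only [neg_mul, neg_div] using h
  have hGamma : Real.Gamma ((3:ℝ)/2) = Real.sqrt π / 2 := by
    rw [show (3:ℝ)/2 = 1/2 + 1 by norm_num, Real.Gamma_add_one (by norm_num),
      Real.Gamma_one_half_eq]
    ring
  have hsplit : ∫ x : ℝ, x ^ 2 * Real.exp (-b * x ^ 2)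
      = (∫ x in Iic (0:ℝ), x ^ 2 * Real.exp (-b * x ^ 2))
        + ∫ x in Ioi (0:ℝ), x ^ 2 * Real.exp (-b * x ^ 2) := by
    rw [← intervalIntegral.integral_Iic_add_Ioi hint.integrableOn hint.integrableOn]
  have hneg : ∫ x in Iic (0:ℝ), x ^ 2 * Real.exp (-b * x ^ 2)
      = ∫ x in Ioi (0:ℝ), x ^ 2 * Real.exp (-b * x ^ 2) := by
    rw [← neg_zero, ← integral_comp_neg_Ioi]
    simp_rw [heven, neg_zero]
  rw [hsplit, hneg, hIoi, hGamma]
  ring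

lemma gaussianPDFReal_zero_eq (v : ℝ≥0) (x : ℝ) :
    gaussianPDFReal 0 v x = (Real.sqrt (2 * π * v))⁻¹ * Real.exp (-(2 * (v:ℝ))⁻¹ * x ^ 2) := by
  rw [gaussianPDFReal]
  rw [sub_zero]
  congr 1
  rw [neg_div, neg_mul]
  congr 1
  rw [div_eq_inv_mul]

lemma integrable_sq_gaussianReal (v : ℝ≥0) (hv : v ≠ 0) :
    Integrable (fun x => x ^ 2) (gaussianReal 0 v) := by
  have hv' : (0:ℝ) < v := lt_of_le_of_ne v.coe_nonneg (by exact_mod_cast hv.symm)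
  rw [gaussianReal_of_var_ne_zero _ hv]
  rw [integrable_withDensity_iff (measurable_gaussianPDF 0 v)
    (Filter.Eventually.of_forall fun x => ENNReal.ofReal_lt_top)]
  have : Integrable (fun x : ℝ =>
      (Real.sqrt (2 * π * v))⁻¹ * (x ^ 2 * Real.exp (-(2 * (v:ℝ))⁻¹ * x ^ 2))) := by
    refine Integrable.const_mul ?_ _
    have := integrable_rpow_mul_exp_neg_mul_sq (b := (2*v:ℝ)⁻¹) (by positivity) (s := 2)
      (by norm_num)
    simpa [Real.rpow_natCast] using this
  refine this.congr (Filter.Eventually.of_forall fun x => ?_)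
  simp only [show gaussianPDF 0 v x = ENNReal.ofReal (gaussianPDFReal 0 v x) from rfl]
  rw [ENNReal.toReal_ofReal (gaussianPDFReal_nonneg 0 v x), gaussianPDFReal_zero_eq]
  ring

lemma integral_sq_gaussianReal (v : ℝ≥0) (hv : v ≠ 0) :
    ∫ x, x ^ 2 ∂(gaussianReal 0 v) = v := by
  have hv' : (0:ℝ) < v := lt_of_le_of_ne v.coe_nonneg (by exact_mod_cast hv.symm)
  have hc : (0:ℝ) < 2 * v := by positivity
  rw [gaussianReal_of_var_ne_zero _ hv]
  rw [show gaussianPDF 0 v = (fun x => ((gaussianPDFReal 0 v x).toNNReal : ℝ≥0∞)) from rfl]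
  rw [integral_withDensity_eq_integral_smul ((measurable_gaussianPDFReal 0 v).real_toNNReal)]
  have heq : ∀ x : ℝ, (gaussianPDFReal 0 v x).toNNReal • x ^ 2
      = (Real.sqrt (2*π*v))⁻¹ * (x^2 * Real.exp (-(2*(v:ℝ))⁻¹ * x^2)) := fun x => by
    rw [NNReal.smul_def, Real.coe_toNNReal _ (gaussianPDFReal_nonneg 0 v x),
      gaussianPDFReal_zero_eq, smul_eq_mul]
    ring
  simp_rw [heq]
  rw [integral_const_mul, integral_sq_exp_neg_mul_sq (by positivity)]
  have h1 : ((2*(v:ℝ))⁻¹) ^ (-(3:ℝ)/2) = (2*(v:ℝ)) ^ ((3:ℝ)/2) := by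
    rw [Real.inv_rpow hc.le, show (-(3:ℝ)/2) = -((3:ℝ)/2) by ring, Real.rpow_neg hc.le, inv_inv]
  have h2 : (2*(v:ℝ)) ^ ((3:ℝ)/2) = (2*(v:ℝ)) * Real.sqrt (2*(v:ℝ)) := by
    rw [show ((3:ℝ)/2) = 1 + (1:ℝ)/2 by norm_num, Real.rpow_add hc, Real.rpow_one,
      Real.sqrt_eq_rpow]
  have h3 : Real.sqrt (2*π*(v:ℝ)) = Real.sqrt (2*(v:ℝ)) * Real.sqrt π := by
    rw [← Real.sqrt_mul hc.le]
    ring_nf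
  rw [h1, h2, h3]
  have hs1 : (0:ℝ) < Real.sqrt (2*(v:ℝ)) := Real.sqrt_pos.mpr hc
  have hs2 : (0:ℝ) < Real.sqrt π := Real.sqrt_pos.mpr Real.pi_pos
  field_simp


lemma pi_map_eval {ι : Type*} [Fintype ι] [DecidableEq ι] {α : ι → Type*}
    [∀ i, MeasurableSpace (α i)] (μ : ∀ i, Measure (α i))
    [∀ i, IsProbabilityMeasure (μ i)] (i : ι) :
    (Measure.pi μ).map (Function.eval i) = μ i := by
  ext s hs
  rw [Measure.map_apply (measurable_pi_apply i) hs, Set.eval_preimage,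
    Measure.pi_pi]
  rw [Fintype.prod_eq_single i (fun j hj => by
    simp [Function.update_of_ne hj])]
  simp

section moments

variable (n : ℕ) {σ : ℝ}

local notation "E" => EuclideanSpace ℝ (Fin n)

lemma euclid_symm_norm_sq (x : Fin n → ℝ) :
    ‖(MeasurableEquiv.toLp 2 (Fin n → ℝ)) x‖ ^ 2 = ∑ i, (x i) ^ 2 := by
  rw [EuclideanSpace.norm_eq, Real.sq_sqrt (by positivity)]
  congr 1
  ext i
  rw [Real.norm_eq_abs, sq_abs]
  rfl

/-- The variance `σ²` as an `ℝ≥0`. -/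
def gvar (σ : ℝ) : ℝ≥0 := ⟨σ ^ 2, sq_nonneg σ⟩

lemma gaussPi_def' : gaussPi n σ
    = (Measure.pi fun _ : Fin n => gaussianReal 0 (gvar σ)).map
      (MeasurableEquiv.toLp 2 (Fin n → ℝ)) := rfl

instance : IsProbabilityMeasure (gaussPi n σ) := by
  rw [gaussPi_def']
  exact Measure.isProbabilityMeasure_map
    (MeasurableEquiv.toLp 2 (Fin n → ℝ)).measurable.aemeasurable

lemma integrable_normsq_gaussPi (hσ : 0 < σ) :
    Integrable (fun δ : E => ‖δ‖ ^ 2) (gaussPi n σ) := by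
  set v : ℝ≥0 := gvar σ with hvdef
  have hv : v ≠ 0 := by
    intro h
    have h2 : (v : ℝ) = 0 := by rw [h]; simp
    exact pow_ne_zero 2 hσ.ne' h2
  rw [gaussPi_def']
  refine (integrable_map_measure
    (continuous_norm.pow 2).aestronglyMeasurable
    (MeasurableEquiv.toLp 2 (Fin n → ℝ)).measurable.aemeasurable).mpr ?_
  have : ∀ i : Fin n, Integrable (fun x : Fin n → ℝ => (x i) ^ 2)
      (Measure.pi fun _ : Fin n => gaussianReal 0 v) := by
    intro i
    have h1 : Integrable (fun t : ℝ => t ^ 2)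
        ((Measure.pi fun _ : Fin n => gaussianReal 0 v).map (Function.eval i)) := by
      rw [pi_map_eval]
      exact integrable_sq_gaussianReal v hv
    exact (integrable_map_measure
      (continuous_pow 2 (M := ℝ)).aestronglyMeasurable
      (measurable_pi_apply i).aemeasurable).mp h1
  have hsum := MeasureTheory.integrable_finset_sum (μ := Measure.pi fun _ : Fin n => gaussianReal 0 v)
    Finset.univ (fun i _ => this i)
  refine hsum.congr (Filter.Eventually.of_forall fun x => ?_)
  exact (euclid_symm_norm_sq n x).symm

lemma integral_normsq_gaussPi (hσ : 0 < σ) :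
    ∫ δ : E, ‖δ‖ ^ 2 ∂(gaussPi n σ) = n * σ ^ 2 := by
  set v : ℝ≥0 := gvar σ with hvdef
  have hv : v ≠ 0 := by
    intro h
    have h2 : (v : ℝ) = 0 := by rw [h]; simp
    exact pow_ne_zero 2 hσ.ne' h2
  rw [gaussPi_def']
  refine (integral_map
    (MeasurableEquiv.toLp 2 (Fin n → ℝ)).measurable.aemeasurable
    (continuous_norm.pow 2).aestronglyMeasurable).trans ?_
  have hint : ∀ i : Fin n, Integrable (fun x : Fin n → ℝ => (x i) ^ 2)
      (Measure.pi fun _ : Fin n => gaussianReal 0 v) := by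
    intro i
    have h1 : Integrable (fun t : ℝ => t ^ 2)
        ((Measure.pi fun _ : Fin n => gaussianReal 0 v).map (Function.eval i)) := by
      rw [pi_map_eval]
      exact integrable_sq_gaussianReal v hv
    exact (integrable_map_measure
      (continuous_pow 2 (M := ℝ)).aestronglyMeasurable
      (measurable_pi_apply i).aemeasurable).mp h1
  have hco : ∀ i : Fin n, ∫ x : Fin n → ℝ, (x i) ^ 2
      ∂(Measure.pi fun _ : Fin n => gaussianReal 0 v) = σ ^ 2 := by
    intro i
    have h2 : ∫ x : Fin n → ℝ, (x i) ^ 2 ∂(Measure.pi fun _ : Fin n => gaussianReal 0 v)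
        = ∫ t, t ^ 2 ∂((Measure.pi fun _ : Fin n => gaussianReal 0 v).map (Function.eval i)) := by
      rw [integral_map (measurable_pi_apply i).aemeasurable
        ((continuous_pow 2 (M := ℝ)).aestronglyMeasurable)]
    rw [h2, pi_map_eval, integral_sq_gaussianReal v hv]
    rfl
  calc ∫ x : Fin n → ℝ, ‖(MeasurableEquiv.toLp 2 (Fin n → ℝ)) x‖ ^ 2
        ∂(Measure.pi fun _ : Fin n => gaussianReal 0 v)
      = ∫ x : Fin n → ℝ, ∑ i, (x i) ^ 2 ∂(Measure.pi fun _ : Fin n => gaussianReal 0 v) := by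
        refine integral_congr_ae (Filter.Eventually.of_forall fun x => ?_)
        exact euclid_symm_norm_sq n x
    _ = ∑ i : Fin n, ∫ x : Fin n → ℝ, (x i) ^ 2 ∂(Measure.pi fun _ : Fin n => gaussianReal 0 v) :=
        integral_finset_sum Finset.univ (fun i _ => hint i)
    _ = n * σ ^ 2 := by simp [hco]

end moments

section firstmoment

variable (n : ℕ) {σ : ℝ}

local notation "E" => EuclideanSpace ℝ (Fin n)

lemma memℒp_norm_gaussPi (hσ : 0 < σ) :
    MemLp (fun δ : E => ‖δ‖) 2 (gaussPi n σ) := by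
  rw [memLp_two_iff_integrable_sq continuous_norm.aestronglyMeasurable]
  exact integrable_normsq_gaussPi n hσ

lemma integrable_norm_gaussPi (hσ : 0 < σ) :
    Integrable (fun δ : E => ‖δ‖) (gaussPi n σ) :=
  (memℒp_norm_gaussPi n hσ).integrable (by norm_num)

lemma integral_norm_gaussPi_le (hσ : 0 < σ) :
    ∫ δ : E, ‖δ‖ ∂(gaussPi n σ) ≤ σ * Real.sqrt n := by
  have hmem := memℒp_norm_gaussPi n hσ
  have hvar := variance_nonneg (fun δ : E => ‖δ‖) (gaussPi n σ)
  rw [variance_eq_sub hmem] at hvar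
  simp only [Pi.pow_apply] at hvar
  have hsq : (∫ δ : E, ‖δ‖ ∂(gaussPi n σ)) ^ 2 ≤ n * σ ^ 2 := by
    have h := integral_normsq_gaussPi n hσ
    have : (∫ δ : E, ‖δ‖ ^ 2 ∂(gaussPi n σ)) = n * σ ^ 2 := h
    nlinarith [hvar]
  have hnn : 0 ≤ ∫ δ : E, ‖δ‖ ∂(gaussPi n σ) :=
    integral_nonneg fun δ => norm_nonneg δ
  have : σ * Real.sqrt n = Real.sqrt (n * σ ^ 2) := by
    rw [Real.sqrt_mul (Nat.cast_nonneg n), Real.sqrt_sq hσ.le]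
    ring
  rw [this]
  exact (Real.le_sqrt hnn (by positivity)).mpr hsq

end firstmoment

instance gaussPi_prob (n : ℕ) (σ : ℝ) : IsProbabilityMeasure (gaussPi n σ) := by
  rw [gaussPi_def']
  exact Measure.isProbabilityMeasure_map
    (MeasurableEquiv.toLp 2 (Fin n → ℝ)).measurable.aemeasurable

/-- **Quantitative convergence of the smoothed gradient.** If `L` is continuously
differentiable with `M`-Lipschitz (and bounded) gradient, then for every `W`,
`‖∇L_σ(W) − ∇L(W)‖ ≤ M σ √n`, where `L_σ(W) := ∫ L(W + δ) dμ_σ(δ)`. -/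
theorem smoothed_gradient_error_bound (n : ℕ) (σ : ℝ) (hσ : 0 < σ)
    (L : EuclideanSpace ℝ (Fin n) → ℝ) (hL : ContDiff ℝ 1 L)
    (M : NNReal) (hlip : LipschitzWith M (fun x => gradient L x))
    (hbound : ∃ B : ℝ, ∀ x, ‖gradient L x‖ ≤ B) :
    ∀ W : EuclideanSpace ℝ (Fin n),
      ‖gradient (fun W' => ∫ δ, L (W' + δ) ∂(gaussPi n σ)) W - gradient L W‖
        ≤ M * σ * Real.sqrt n := by
  intro W
  set μ := gaussPi n σ with hμ
  obtain ⟨B, hB⟩ := hbound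
  have hL1 : Differentiable ℝ L := hL.differentiable one_ne_zero
  have hgrad_fderiv : ∀ x, fderiv ℝ L x
      = InnerProductSpace.toDual ℝ (EuclideanSpace ℝ (Fin n)) (gradient L x) := by
    intro x
    rw [gradient, LinearIsometryEquiv.apply_symm_apply]
  have hfb : ∀ x, ‖fderiv ℝ L x‖ ≤ B := by
    intro x
    rw [hgrad_fderiv, LinearIsometryEquiv.norm_map]
    exact hB x
  have hB0 : 0 ≤ B := (norm_nonneg _).trans (hB 0)
  have hLlip : LipschitzWith B.toNNReal L := by
    refine lipschitzWith_of_nnnorm_fderiv_le hL1 fun x => ?_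
    rw [← NNReal.coe_le_coe, coe_nnnorm, Real.coe_toNNReal _ hB0]
    exact hfb x
  have hfderiv_lip : ∀ x y, ‖fderiv ℝ L x - fderiv ℝ L y‖ ≤ M * ‖x - y‖ := by
    intro x y
    rw [hgrad_fderiv, hgrad_fderiv, ← LinearIsometryEquiv.map_sub,
      LinearIsometryEquiv.norm_map]
    simpa [dist_eq_norm] using hlip.dist_le_mul x y
  have key : HasFDerivAt (fun W' => ∫ δ, L (W' + δ) ∂μ)
      (∫ δ, fderiv ℝ L (W + δ) ∂μ) W := by
    apply hasFDerivAt_integral_of_dominated_of_fderiv_le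
      (F := fun x (δ : EuclideanSpace ℝ (Fin n)) => L (x + δ))
      (F' := fun x (δ : EuclideanSpace ℝ (Fin n)) => fderiv ℝ L (x + δ))
      (bound := fun _ => B) (s := Metric.ball W 1) (Metric.ball_mem_nhds W one_pos)
    · filter_upwards with x
      exact Continuous.aestronglyMeasurable (by fun_prop)
    · refine Integrable.mono' ((integrable_const |L W|).add
        ((integrable_norm_gaussPi n hσ).const_mul ↑B.toNNReal)) ?_ ?_
      · exact Continuous.aestronglyMeasurable (by fun_prop)
      · filter_upwards with δ
        have h1 : ‖L (W + δ) - L W‖ ≤ B.toNNReal * ‖δ‖ := by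
          simpa [dist_eq_norm, add_sub_cancel_left] using hLlip.dist_le_mul (W + δ) W
        calc ‖L (W + δ)‖ = ‖L W + (L (W + δ) - L W)‖ := by ring_nf
          _ ≤ ‖L W‖ + ‖L (W + δ) - L W‖ := norm_add_le _ _
          _ ≤ |L W| + ↑B.toNNReal * ‖δ‖ := by
              rw [Real.norm_eq_abs]
              gcongr
    · exact Continuous.aestronglyMeasurable
        ((hL.continuous_fderiv one_ne_zero).comp (continuous_const.add continuous_id) :
          Continuous fun δ => fderiv ℝ L (W + δ))
    · filter_upwards with δ
      intro x _
      exact hfb (x + δ)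
    · exact integrable_const B
    · filter_upwards with δ
      intro x _
      have h := ((hL1 (x + δ)).hasFDerivAt).comp x ((hasFDerivAt_id x).add_const δ)
      simpa [Function.comp_def] using h
  have hfd : fderiv ℝ (fun W' => ∫ δ, L (W' + δ) ∂μ) W = ∫ δ, fderiv ℝ L (W + δ) ∂μ :=
    key.fderiv
  have hnorm_eq : ‖gradient (fun W' => ∫ δ, L (W' + δ) ∂μ) W - gradient L W‖
      = ‖(∫ δ, fderiv ℝ L (W + δ) ∂μ) - fderiv ℝ L W‖ := by
    rw [gradient, gradient, hfd, ← LinearIsometryEquiv.map_sub,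
      LinearIsometryEquiv.norm_map]
  rw [hnorm_eq]
  have hint_fd : Integrable (fun δ => fderiv ℝ L (W + δ)) μ := by
    refine Integrable.mono' (integrable_const B) ?_ ?_
    · exact Continuous.aestronglyMeasurable
        ((hL.continuous_fderiv one_ne_zero).comp (continuous_const.add continuous_id) :
          Continuous fun δ => fderiv ℝ L (W + δ))
    · filter_upwards with δ
      exact hfb (W + δ)
  have hconst : fderiv ℝ L W = ∫ _, fderiv ℝ L W ∂μ := by
    rw [integral_const]
    simp
  rw [hconst, ← integral_sub hint_fd (integrable_const _)]
  calc ‖∫ δ, (fderiv ℝ L (W + δ) - fderiv ℝ L W) ∂μ‖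
      ≤ ∫ δ, ‖fderiv ℝ L (W + δ) - fderiv ℝ L W‖ ∂μ := norm_integral_le_integral_norm _
    _ ≤ ∫ δ, (M : ℝ) * ‖δ‖ ∂μ := by
        refine integral_mono_of_nonneg (Filter.Eventually.of_forall fun δ => norm_nonneg _)
          ((integrable_norm_gaussPi n hσ).const_mul M) ?_
        filter_upwards with δ
        have := hfderiv_lip (W + δ) W
        simpa [add_sub_cancel_left] using this
    _ = (M : ℝ) * ∫ δ, ‖δ‖ ∂μ := integral_const_mul _ _
    _ ≤ (M : ℝ) * (σ * Real.sqrt n) := by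
        gcongr
        exact integral_norm_gaussPi_le n hσ
    _ = M * σ * Real.sqrt n := by ring
end

section
/- Deterministic error bound combining Theorem 1 with operator-norm control: let n, K ∈ ℕ with K ≥ 1, σ > 0, W ∈ EuclideanSpace ℝ (Fin n), and let L : EuclideanSpace ℝ (Fin n) → ℝ be differentiable at W. Suppose δ₁, …, δ_K ∈ EuclideanSpace ℝ (Fin n) satisfy the exact central-difference scheme L(W + δ_k) − L(W − δ_k) = 2 · ⟪δ_k, ∇L(W)⟫ for every k. With Ĝ := (1/K) · Σ_{k=1}^{K} (δ_k / (2σ²)) · (L(W + δ_k) − L(W − δ_k)) and Σ̂ := (1/(Kσ²)) · Σ_{k=1}^{K} δ_k δ_kᵀ, one has ‖Ĝ − ∇L(W)‖ ≤ ‖Σ̂ − I‖₂ · ‖∇L(W)‖, where ‖Σ̂ − I‖₂ is the operator norm (spectral norm) of the matrix Σ̂ − I and ‖·‖ the Euclidean norm. -/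
open MeasureTheory RealInnerProductSpace

/-- **Deterministic error bound for the BAFFLE estimator.** Under the exact
central-difference scheme, the estimator `Ĝ` satisfies
`‖Ĝ − ∇L(W)‖ ≤ ‖Σ̂ − I‖₂ ‖∇L(W)‖`, where `Σ̂ := (1/(Kσ²)) Σ_k δ_k δ_kᵀ` and `‖·‖₂`
is the operator norm of the induced linear map on `EuclideanSpace ℝ (Fin n)`. -/
theorem baffle_estimator_error_bound (n K : ℕ) (hK : 1 ≤ K) (σ : ℝ) (hσ : 0 < σ)
    (W : EuclideanSpace ℝ (Fin n)) (L : EuclideanSpace ℝ (Fin n) → ℝ)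
    (hL : DifferentiableAt ℝ L W)
    (δ : Fin K → EuclideanSpace ℝ (Fin n))
    (hcentral : ∀ k : Fin K,
      L (W + δ k) - L (W - δ k) = 2 * ⟪δ k, gradient L W⟫) :
    ‖((K : ℝ)⁻¹ • ∑ k : Fin K, ((L (W + δ k) - L (W - δ k)) / (2 * σ ^ 2)) • δ k)
        - gradient L W‖
      ≤ ‖(((K : ℝ) * σ ^ 2)⁻¹ • ∑ k : Fin K, (innerSL ℝ (δ k)).smulRight (δ k))
          - ContinuousLinearMap.id ℝ (EuclideanSpace ℝ (Fin n))‖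
        * ‖gradient L W‖ := by
  set g := gradient L W
  have key : ((K : ℝ)⁻¹ • ∑ k : Fin K, ((L (W + δ k) - L (W - δ k)) / (2 * σ ^ 2)) • δ k)
      - g
      = ((((K : ℝ) * σ ^ 2)⁻¹ • ∑ k : Fin K, (innerSL ℝ (δ k)).smulRight (δ k))
          - ContinuousLinearMap.id ℝ (EuclideanSpace ℝ (Fin n))) g := by
    simp only [ContinuousLinearMap.sub_apply, ContinuousLinearMap.smul_apply,
      ContinuousLinearMap.sum_apply, ContinuousLinearMap.smulRight_apply,
      ContinuousLinearMap.id_apply, innerSL_apply_apply]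
    congr 1
    rw [mul_inv, mul_smul]
    congr 1
    rw [Finset.smul_sum]
    refine Finset.sum_congr rfl fun k _ => ?_
    rw [hcentral k, smul_smul]
    congr 1
    field_simp
  rw [key]
  exact ContinuousLinearMap.le_opNorm _ _
end
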